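/- Let r ≥ 2 and s ≥ 1 be integers, g = (r+1)(s+1), d = r(s+2), and N = (∏_{i=0}^r i!)·g! / ∏_{i=0}^r (s+1+i)!. Define a₀ = 0, a₁ = 2, a_i = i+2 for 2 ≤ i ≤ r−1, and a_r = r+3. Then (g−2)! · ∏_{0 ≤ i < j ≤ r} (a_j − a_i) / ∏_{i=0}^r (g−2−d+r+a_i)! = (r−1)(g+r+1)(3g−2d+r−3)·N / (3(g−1)(g−d+2r+1)), an identity of rational numbers (all factorial arguments g−2−d+r+a_i = s−1+a_i are nonnegative). -/

import Mathlib

open Finset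


private lemma natL (m : ℕ) : ∏ k ∈ range m, (m - k) = Nat.factorial m := by
  induction m with
  | zero => simp
  | succ n ih =>
    rw [Finset.prod_range_succ']
    simp only [Nat.succ_sub_succ, Nat.sub_zero]
    rw [ih, Nat.factorial_succ, Nat.mul_comm]

private lemma natL2 (m : ℕ) (hm : 1 ≤ m) :
    ∏ k ∈ range (m - 1), (m - k) = Nat.factorial m := by
  have h : (∏ k ∈ range (m - 1), (m - k)) * (m - (m - 1)) = Nat.factorial m := by
    rw [← Finset.prod_range_succ, show m - 1 + 1 = m from by omega]
    exact natL m
  simpa [show m - (m - 1) = 1 from by omega] using h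

private lemma C1 (j : ℕ) (hj : 2 ≤ j) :
    ∏ i ∈ Ico 2 j, (j - i) = Nat.factorial (j - 2) := by
  rw [Finset.prod_Ico_eq_prod_range]
  rw [Finset.prod_congr rfl (fun k _ => show j - (2 + k) = (j - 2) - k from by omega)]
  exact natL (j - 2)

private lemma C2 (r : ℕ) (hr : 2 ≤ r) :
    ∏ i ∈ Ico 2 r, (r + 1 - i) = Nat.factorial (r - 1) := by
  rw [Finset.prod_Ico_eq_prod_range]
  rw [show r - 2 = (r - 1) - 1 from by omega]
  rw [Finset.prod_congr rfl (fun k _ => show r + 1 - (2 + k) = (r - 1) - k from by omega)]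
  exact natL2 (r - 1) (by omega)

private lemma C1q (j : ℕ) (hj : 2 ≤ j) :
    ∏ i ∈ Ico 2 j, ((j : ℚ) - (i : ℚ)) = (Nat.factorial (j - 2) : ℚ) := by
  rw [← C1 j hj, Nat.cast_prod]
  refine Finset.prod_congr rfl fun i hi => ?_
  rw [Nat.cast_sub (le_of_lt (Finset.mem_Ico.mp hi).2)]

private lemma C2q (r : ℕ) (hr : 2 ≤ r) :
    ∏ i ∈ Ico 2 r, ((r : ℚ) + 1 - (i : ℚ)) = (Nat.factorial (r - 1) : ℚ) := by
  rw [← C2 r hr, Nat.cast_prod]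
  refine Finset.prod_congr rfl fun i hi => ?_
  rw [Nat.cast_sub (by have := (Finset.mem_Ico.mp hi).2; omega)]
  push_cast; ring

private lemma Wq (r : ℕ) (hr : 2 ≤ r) :
    6 * (∏ j ∈ Ico 2 r, (((j : ℚ) + 2) * (j : ℚ) * (Nat.factorial (j - 2) : ℚ))) *
        (((r : ℚ) + 3) * ((r : ℚ) + 1) * (Nat.factorial (r - 1) : ℚ))
      = (∏ i ∈ range (r + 1), (Nat.factorial i : ℚ)) *
        (((r : ℚ) + 3) * ((r : ℚ) + 1) * ((r : ℚ) + 1) * ((r : ℚ) - 1)) := by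
  induction r, hr using Nat.le_induction with
  | base => norm_num [Finset.prod_range_succ, Nat.factorial]
  | succ n hn ih =>
    rw [Finset.prod_Ico_succ_top hn, Finset.prod_range_succ, Nat.add_sub_cancel]
    have hpos : 0 < n := by omega
    have h2 : (Nat.factorial n : ℚ) = (n : ℚ) * (Nat.factorial (n - 1) : ℚ) := by
      have e : Nat.factorial n = n * Nat.factorial (n - 1) := by
        conv_lhs => rw [show n = (n - 1) + 1 from by omega]
        rw [Nat.factorial_succ, show n - 1 + 1 = n from by omega]
      rw [e]; push_cast; ring
    have h3 : (Nat.factorial (n - 1) : ℚ) = ((n : ℚ) - 1) * (Nat.factorial (n - 2) : ℚ) := by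
      have e : Nat.factorial (n - 1) = (n - 1) * Nat.factorial (n - 2) := by
        rw [show n - 1 = (n - 2) + 1 from by omega, Nat.factorial_succ]
      rw [e, Nat.cast_mul, Nat.cast_sub (by omega : 1 ≤ n)]; norm_num
    have h1 : (Nat.factorial (n + 1) : ℚ) = ((n : ℚ) + 1) * (Nat.factorial n : ℚ) := by
      rw [Nat.factorial_succ]; push_cast; ring
    rw [h1, h2, h3]
    rw [h3] at ih
    push_cast
    apply mul_right_cancel₀ (show ((n : ℚ) + 3) * ((n : ℚ) + 1) ≠ 0 by positivity)
    linear_combination ((Nat.factorial (n - 2) : ℚ) * (n : ℚ) ^ 2 * ((n : ℚ) + 2) ^ 2 *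
      ((n : ℚ) + 4)) * ih

set_option maxHeartbeats 1000000 in
/-- Schubert-calculus evaluation for b = (3,2,…,2,1,0), i.e.
a = (0,2,4,5,…,r+1,r+3), and k = g−2: with g = (r+1)(s+1), d = r(s+2)
and N the Castelnuovo number,
(g−2)!·∏_{i<j}(a_j−a_i)/∏_i (g−2−d+r+a_i)!
  = (r−1)(g+r+1)(3g−2d+r−3)·N/(3(g−1)(g−d+2r+1)),
an identity of rational numbers (all factorial arguments
g−2−d+r+a_i = s−1+a_i are nonnegative). -/
theorem schubert_evaluation_class_c (r s : ℕ) (hr : 2 ≤ r) (hs : 1 ≤ s)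
    (g d : ℕ) (hg : g = (r + 1) * (s + 1)) (hd : d = r * (s + 2))
    (N : ℚ)
    (hN : N = (((∏ i ∈ Finset.range (r + 1), Nat.factorial i) *
        Nat.factorial g : ℕ) : ℚ) /
      ((∏ i ∈ Finset.range (r + 1), Nat.factorial (s + 1 + i) : ℕ) : ℚ))
    (a : ℕ → ℕ) (ha0 : a 0 = 0) (ha1 : a 1 = 2)
    (ha : ∀ i, 2 ≤ i → i ≤ r - 1 → a i = i + 2) (har : a r = r + 3) :
    (Nat.factorial (g - 2) : ℚ) *
        (∏ j ∈ Finset.range (r + 1), ∏ i ∈ Finset.range j,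
          ((a j : ℚ) - (a i : ℚ))) /
        (∏ i ∈ Finset.range (r + 1),
          (Nat.factorial (g + r + a i - (d + 2)) : ℚ))
      = ((r : ℚ) - 1) * ((g : ℚ) + (r : ℚ) + 1) *
          (3 * (g : ℚ) - 2 * (d : ℚ) + (r : ℚ) - 3) * N /
        (3 * ((g : ℚ) - 1) * ((g : ℚ) - (d : ℚ) + 2 * (r : ℚ) + 1)) := by
  have hgr : g + r = d + s + 1 := by rw [hg, hd]; ring
  have harg : ∀ i : ℕ, g + r + a i - (d + 2) = s - 1 + a i := by intro i; omega
  have hgq : (g : ℚ) = ((r : ℚ) + 1) * ((s : ℚ) + 1) := by rw [hg]; push_cast; ring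
  have hdq : (d : ℚ) = (r : ℚ) * ((s : ℚ) + 2) := by rw [hd]; push_cast; ring
  have h2g : 2 ≤ g := by rw [hg]; nlinarith
  -- factorial expansions
  have hfg : (Nat.factorial g : ℚ)
      = (Nat.factorial (g - 2) : ℚ) * ((g : ℚ) - 1) * (g : ℚ) := by
    have e : Nat.factorial g = ((g - 2) + 1 + 1) * (((g - 2) + 1) * Nat.factorial (g - 2)) := by
      conv_lhs => rw [show g = (g - 2) + 1 + 1 from by omega]
      rw [Nat.factorial_succ, Nat.factorial_succ]
    rw [e]; push_cast [Nat.cast_sub h2g]; ring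
  have hfs2 : (Nat.factorial (s + 2) : ℚ)
      = (Nat.factorial (s - 1) : ℚ) * (s : ℚ) * ((s : ℚ) + 1) * ((s : ℚ) + 2) := by
    have e : Nat.factorial (s + 2)
        = ((s - 1) + 1 + 1 + 1) * (((s - 1) + 1 + 1) * (((s - 1) + 1) * Nat.factorial (s - 1))) := by
      conv_lhs => rw [show s + 2 = (s - 1) + 1 + 1 + 1 from by omega]
      rw [Nat.factorial_succ, Nat.factorial_succ, Nat.factorial_succ]
    rw [e]; push_cast [Nat.cast_sub hs]; ring
  have hfsr : (Nat.factorial (s + r + 2) : ℚ)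
      = (Nat.factorial (s + r + 1) : ℚ) * ((s : ℚ) + (r : ℚ) + 2) := by
    rw [show s + r + 2 = (s + r + 1) + 1 from rfl, Nat.factorial_succ]; push_cast; ring
  -- the Vandermonde-type product
  have hV : (∏ j ∈ Finset.range (r + 1), ∏ i ∈ Finset.range j,
        ((a j : ℚ) - (a i : ℚ)))
      = 2 * (∏ j ∈ Ico 2 r, (((j : ℚ) + 2) * (j : ℚ) * (Nat.factorial (j - 2) : ℚ))) *
        (((r : ℚ) + 3) * ((r : ℚ) + 1) * (Nat.factorial (r - 1) : ℚ)) := by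
    rw [Finset.prod_range_succ, ← Finset.prod_range_mul_prod_Ico _ hr,
      Finset.prod_range_succ, Finset.prod_range_one]
    have e0 : (∏ i ∈ Finset.range 0, ((a 0 : ℚ) - (a i : ℚ))) = 1 := by simp
    have e1 : (∏ i ∈ Finset.range 1, ((a 1 : ℚ) - (a i : ℚ))) = 2 := by
      simp [ha0, ha1]
    have emid : (∏ j ∈ Ico 2 r, ∏ i ∈ Finset.range j, ((a j : ℚ) - (a i : ℚ)))
        = ∏ j ∈ Ico 2 r, (((j : ℚ) + 2) * (j : ℚ) * (Nat.factorial (j - 2) : ℚ)) := by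
      refine Finset.prod_congr rfl fun j hj => ?_
      obtain ⟨hj2, hjr⟩ := Finset.mem_Ico.mp hj
      have haj : a j = j + 2 := ha j hj2 (by omega)
      rw [← Finset.prod_range_mul_prod_Ico _ hj2, Finset.prod_range_succ,
        Finset.prod_range_one]
      have hmi : (∏ i ∈ Ico 2 j, ((a j : ℚ) - (a i : ℚ)))
          = ∏ i ∈ Ico 2 j, ((j : ℚ) - (i : ℚ)) := by
        refine Finset.prod_congr rfl fun i hi => ?_
        obtain ⟨hi2, hij⟩ := Finset.mem_Ico.mp hi
        rw [haj, ha i hi2 (by omega)]; push_cast; ring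
      rw [hmi, C1q j hj2, haj, ha0, ha1]
      push_cast; ring
    have etop : (∏ i ∈ Finset.range r, ((a r : ℚ) - (a i : ℚ)))
        = ((r : ℚ) + 3) * ((r : ℚ) + 1) * (Nat.factorial (r - 1) : ℚ) := by
      rw [← Finset.prod_range_mul_prod_Ico _ hr, Finset.prod_range_succ,
        Finset.prod_range_one]
      have hmi : (∏ i ∈ Ico 2 r, ((a r : ℚ) - (a i : ℚ)))
          = ∏ i ∈ Ico 2 r, ((r : ℚ) + 1 - (i : ℚ)) := by
        refine Finset.prod_congr rfl fun i hi => ?_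
        obtain ⟨hi2, hir⟩ := Finset.mem_Ico.mp hi
        rw [har, ha i hi2 (by omega)]; push_cast; ring
      rw [hmi, C2q r hr, har, ha0, ha1]
      push_cast; ring
    rw [e0, e1, emid, etop]; ring
  -- denominator product
  have hD1 : (∏ i ∈ Finset.range (r + 1),
        (Nat.factorial (g + r + a i - (d + 2)) : ℚ))
      = (Nat.factorial (s - 1) : ℚ) * (Nat.factorial (s + 1) : ℚ) *
        (∏ i ∈ Ico 2 r, (Nat.factorial (s + 1 + i) : ℚ)) *
        (Nat.factorial (s + r + 2) : ℚ) := by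
    rw [Finset.prod_congr rfl fun i _ =>
      (by rw [harg i] : (Nat.factorial (g + r + a i - (d + 2)) : ℚ)
        = (Nat.factorial (s - 1 + a i) : ℚ))]
    rw [Finset.prod_range_succ, ← Finset.prod_range_mul_prod_Ico _ hr,
      Finset.prod_range_succ, Finset.prod_range_one]
    have e0 : s - 1 + a 0 = s - 1 := by rw [ha0]; omega
    have e1 : s - 1 + a 1 = s + 1 := by rw [ha1]; omega
    have er : s - 1 + a r = s + r + 2 := by rw [har]; omega
    have emid : (∏ i ∈ Ico 2 r, (Nat.factorial (s - 1 + a i) : ℚ))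
        = ∏ i ∈ Ico 2 r, (Nat.factorial (s + 1 + i) : ℚ) := by
      refine Finset.prod_congr rfl fun i hi => ?_
      obtain ⟨hi2, hir⟩ := Finset.mem_Ico.mp hi
      have hai : a i = i + 2 := ha i hi2 (by omega)
      have harg2 : s - 1 + a i = s + 1 + i := by omega
      rw [harg2]
    rw [e0, e1, er, emid]
  -- Castelnuovo denominator product
  have hD2 : (∏ i ∈ Finset.range (r + 1), (Nat.factorial (s + 1 + i) : ℚ))
      = (Nat.factorial (s + 1) : ℚ) * (Nat.factorial (s + 2) : ℚ) *
        (∏ i ∈ Ico 2 r, (Nat.factorial (s + 1 + i) : ℚ)) *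
        (Nat.factorial (s + r + 1) : ℚ) := by
    rw [Finset.prod_range_succ, ← Finset.prod_range_mul_prod_Ico _ hr,
      Finset.prod_range_succ, Finset.prod_range_one]
    rw [show s + 1 + r = s + r + 1 from by omega]
  have hW := Wq r hr
  have hE0 : (Nat.factorial (r - 1) : ℚ) ≠ 0 :=
    Nat.cast_ne_zero.mpr (Nat.factorial_ne_zero _)
  have hPi : (∏ j ∈ Ico 2 r, (((j : ℚ) + 2) * (j : ℚ) * (Nat.factorial (j - 2) : ℚ)))
      = (∏ i ∈ range (r + 1), (Nat.factorial i : ℚ)) *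
          (((r : ℚ) + 3) * ((r : ℚ) + 1) * ((r : ℚ) + 1) * ((r : ℚ) - 1)) /
        (6 * (((r : ℚ) + 3) * ((r : ℚ) + 1) * (Nat.factorial (r - 1) : ℚ))) := by
    rw [eq_div_iff (by positivity)]
    linear_combination hW
  rw [hN, hV, hD1, hPi]
  push_cast
  rw [hD2, hfg, hfs2, hfsr, hgq, hdq]
  have hrq : (2 : ℚ) ≤ (r : ℚ) := by exact_mod_cast hr
  have hsq : (1 : ℚ) ≤ (s : ℚ) := by exact_mod_cast hs
  have n1 : (Nat.factorial (s - 1) : ℚ) ≠ 0 := Nat.cast_ne_zero.mpr (Nat.factorial_ne_zero _)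
  have n2 : (Nat.factorial (s + 1) : ℚ) ≠ 0 := Nat.cast_ne_zero.mpr (Nat.factorial_ne_zero _)
  have n3 : (Nat.factorial (s + r + 1) : ℚ) ≠ 0 := Nat.cast_ne_zero.mpr (Nat.factorial_ne_zero _)
  have n4 : (Nat.factorial (g - 2) : ℚ) ≠ 0 := Nat.cast_ne_zero.mpr (Nat.factorial_ne_zero _)
  have n5 : (∏ i ∈ Ico 2 r, (Nat.factorial (s + 1 + i) : ℚ)) ≠ 0 :=
    Finset.prod_ne_zero_iff.mpr fun i _ => Nat.cast_ne_zero.mpr (Nat.factorial_ne_zero _)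
  have n6 : (∏ i ∈ range (r + 1), (Nat.factorial i : ℚ)) ≠ 0 :=
    Finset.prod_ne_zero_iff.mpr fun i _ => Nat.cast_ne_zero.mpr (Nat.factorial_ne_zero _)
  have n7 : (s : ℚ) ≠ 0 := by positivity
  have n8 : (s : ℚ) + 1 ≠ 0 := by positivity
  have n9 : (s : ℚ) + 2 ≠ 0 := by positivity
  have n10 : (s : ℚ) + (r : ℚ) + 2 ≠ 0 := by positivity
  have n11 : (r : ℚ) + 3 ≠ 0 := by positivity
  have n12 : (r : ℚ) + 1 ≠ 0 := by positivity
  have n13 : ((r : ℚ) + 1) * ((s : ℚ) + 1) - 1 ≠ 0 := by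
    have h : ((r : ℚ) + 1) * ((s : ℚ) + 1) - 1 = (r : ℚ) * (s : ℚ) + (r : ℚ) + (s : ℚ) := by ring
    rw [h]; positivity
  have n14 : ((r : ℚ) + 1) * ((s : ℚ) + 1) - (r : ℚ) * ((s : ℚ) + 2) + 2 * (r : ℚ) + 1 ≠ 0 := by
    have h : ((r : ℚ) + 1) * ((s : ℚ) + 1) - (r : ℚ) * ((s : ℚ) + 2) + 2 * (r : ℚ) + 1
        = (r : ℚ) + (s : ℚ) + 2 := by ring
    rw [h]; positivity
  field_simp
  ring
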